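/- Fix an integer d ≥ 3 and an infinite field F. Let e_0, ..., e_{d-1} be the standard basis of F^d, let X = ∪_{i=0}^{d-2} span{e_0, e_{i+1}}, and let f : X → F^d be the inclusion map. Then the VC-density of C_f = {Z_{f,a} : a ∈ F^d, a ≠ 0} equals d − 1; in particular, for every n ∈ ℕ there is a finite subset Y ⊆ X of size (d−1)·n such that |{A ∩ Y : A ∈ C_f}| ≥ n^{d-1}, even though f(X) is contained in a finite union of 2-dimensional subspaces of F^d. -/

import Mathlib

/-- The zero set of the linear combination of the components of `f` with coefficients `a`. -/
def zeroSet {X F : Type*} [Field F] {d : ℕ} (f : X → Fin d → F) (a : Fin d → F) : Set X :=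
  {c | ∑ i, a i * f c i = 0}

/-- The family of zero sets of nontrivial linear combinations of the components of `f`. -/
def zeroSets {X F : Type*} [Field F] {d : ℕ} (f : X → Fin d → F) : Set (Set X) :=
  {s | ∃ a : Fin d → F, a ≠ 0 ∧ s = zeroSet f a}

/-- The set of traces of members of `C` on `Y`. -/
def traces {X : Type*} (C : Set (Set X)) (Y : Set X) : Set (Set X) :=
  (fun A => A ∩ Y) '' C

/-- The VC shatter function: the largest number of traces of `C` on an `n`-element subset. -/
noncomputable def vcShatterFn {X : Type*} (C : Set (Set X)) (n : ℕ) : ℕ :=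
  sSup {m | ∃ Y : Finset X, Y.card = n ∧ (traces C ↑Y).ncard = m}

/-- The VC density: the infimum of positive reals `ℓ` such that the shatter function
is bounded by `K * n ^ ℓ` for some constant `K`. -/
noncomputable def vcDensity {X : Type*} (C : Set (Set X)) : ℝ :=
  sInf {ℓ : ℝ | 0 < ℓ ∧ ∃ K : ℝ, ∀ n : ℕ, 1 ≤ n → (vcShatterFn C n : ℝ) ≤ K * (n : ℝ) ^ ℓ}

open Submodule Set Finset

section Aux

variable {X F : Type*} [Field F] {d : ℕ}

/-- the linear functional `v ↦ ∑ i, a i * v i` -/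
def dotL (a : Fin d → F) : (Fin d → F) →ₗ[F] F where
  toFun v := ∑ i, a i * v i
  map_add' u v := by simp [mul_add, Finset.sum_add_distrib]
  map_smul' c v := by simp [Finset.mul_sum, mul_left_comm]

lemma sum_mul_single (a : Fin d → F) (m : Fin d) (c : F) :
    ∑ k, a k * (Pi.single m c : Fin d → F) k = a m * c := by
  have h : ∀ b ∈ Finset.univ, b ≠ m → a b * (Pi.single m c : Fin d → F) b = 0 := by
    intro b _ hb; rw [Pi.single_eq_of_ne hb, mul_zero]
  rw [Finset.sum_eq_single m h (by simp), Pi.single_eq_same]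

lemma dotL_ne_top {a : Fin d → F} (ha : a ≠ 0) : LinearMap.ker (dotL a) ≠ ⊤ := by
  obtain ⟨i, hi⟩ := Function.ne_iff.1 ha
  simp only [Pi.zero_apply] at hi
  intro h
  have hmem : (Pi.single i 1 : Fin d → F) ∈ LinearMap.ker (dotL a) := h ▸ Submodule.mem_top
  have : dotL a (Pi.single i 1 : Fin d → F) = 0 := LinearMap.mem_ker.1 hmem
  rw [dotL] at this
  simp only [LinearMap.coe_mk, AddHom.coe_mk] at this
  rw [sum_mul_single] at this
  simp at this
  exact hi this

/-- Key counting lemma: the traces of `zeroSets f` on a finite set `Y` are at most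
the number of subsets of `Y` of size `< d`. -/
lemma traces_ncard_le (f : X → Fin d → F) (hf : Function.Injective f) (Y : Finset X) :
    (traces (zeroSets f) ↑Y).ncard ≤ (Y.powerset.filter (fun W => W.card < d)).card := by
  classical
  set Φ : Finset X → Set X := fun W => {x | x ∈ (Y : Set X) ∧ f x ∈ span F (f '' ↑W)} with hΦ
  set P := Y.powerset.filter (fun W => W.card < d) with hP
  have hsub : traces (zeroSets f) ↑Y ⊆ Φ '' ↑P := by
    rintro S ⟨A, ⟨a, ha, rfl⟩, rfl⟩
    set S := zeroSet f a ∩ ↑Y with hS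
    have hker : f '' S ⊆ (LinearMap.ker (dotL a) : Set (Fin d → F)) := by
      rintro v ⟨x, hx, rfl⟩
      exact hx.1
    obtain ⟨b, hbs, hbspan, hbli⟩ := exists_linearIndependent F (f '' S)
    have hbker : b ⊆ (LinearMap.ker (dotL a) : Set (Fin d → F)) := hbs.trans hker
    have hbfin : b.Finite := hbli.setFinite
    haveI := hbfin.fintype
    have hcard : b.toFinset.card < d := by
      have h1 : Module.finrank F (span F b) = b.toFinset.card :=
        finrank_span_set_eq_card hbli
      have h2 : span F b ≤ LinearMap.ker (dotL a) := span_le.2 hbker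
      have h3 : Module.finrank F (LinearMap.ker (dotL a)) < d := by
        have := Submodule.finrank_lt (K := F) (V := Fin d → F)
          (dotL_ne_top ha)
        simpa [Module.finrank_pi] using this
      have := Submodule.finrank_mono h2
      omega
    set W : Finset X := Y.filter (fun x => f x ∈ b) with hW
    have hWimg : f '' (↑W : Set X) = b := by
      apply Set.Subset.antisymm
      · rintro v ⟨x, hx, rfl⟩
        simp only [hW, Finset.coe_filter, Set.mem_setOf_eq] at hx
        exact hx.2
      · intro v hv
        obtain ⟨x, hx, rfl⟩ := hbs hv
        refine ⟨x, ?_, rfl⟩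
        simp only [hW, Finset.coe_filter, Set.mem_setOf_eq]
        exact ⟨Finset.mem_coe.1 hx.2, hv⟩
    refine ⟨W, ?_, ?_⟩
    · simp only [hP, Finset.coe_filter, Set.mem_setOf_eq, Finset.mem_powerset]
      refine ⟨Finset.filter_subset _ _, ?_⟩
      have : (W.image f).card = W.card := Finset.card_image_of_injective _ hf
      have himg : W.image f = b.toFinset := by
        apply Finset.coe_injective
        rw [Finset.coe_image, hWimg]
        simp
      have := congrArg Finset.card himg
      omega
    · ext x
      simp only [hΦ, Set.mem_setOf_eq, Set.mem_inter_iff]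
      constructor
      · rintro ⟨hxY, hxspan⟩
        rw [hWimg] at hxspan
        have hk : f x ∈ LinearMap.ker (dotL a) := (span_le.2 hbker) hxspan
        exact ⟨hk, hxY⟩
      · rintro ⟨hxz, hxY⟩
        refine ⟨hxY, ?_⟩
        rw [hWimg, hbspan]
        exact subset_span ⟨x, ⟨hxz, hxY⟩, rfl⟩
  calc (traces (zeroSets f) ↑Y).ncard ≤ (Φ '' ↑P).ncard :=
        Set.ncard_le_ncard hsub ((P.finite_toSet).image Φ)
    _ ≤ (↑P : Set (Finset X)).ncard := Set.ncard_image_le P.finite_toSet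
    _ = P.card := Set.ncard_coe_finset P

lemma filter_card_le {X : Type*} [DecidableEq X] (Y : Finset X) (d : ℕ) :
    (Y.powerset.filter (fun W => W.card < d)).card ≤ ∑ k ∈ Finset.range d, Y.card.choose k := by
  classical
  have hsub : Y.powerset.filter (fun W => W.card < d) ⊆
      (Finset.range d).biUnion (fun k => Finset.powersetCard k Y) := by
    intro W hW
    simp only [Finset.mem_filter, Finset.mem_powerset] at hW
    simp only [Finset.mem_biUnion, Finset.mem_range, Finset.mem_powersetCard]
    exact ⟨W.card, hW.2, hW.1, rfl⟩
  calc _ ≤ _ := Finset.card_le_card hsub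
    _ ≤ ∑ k ∈ Finset.range d, (Finset.powersetCard k Y).card := Finset.card_biUnion_le
    _ = _ := by simp [Finset.card_powersetCard]

lemma sum_choose_le {n d : ℕ} (hn : 1 ≤ n) :
    ∑ k ∈ Finset.range d, n.choose k ≤ d * n ^ (d - 1) := by
  calc ∑ k ∈ Finset.range d, n.choose k ≤ ∑ _k ∈ Finset.range d, n ^ (d - 1) := by
        apply Finset.sum_le_sum
        intro k hk
        calc n.choose k ≤ n ^ k := Nat.choose_le_pow n k
          _ ≤ n ^ (d - 1) :=
            Nat.pow_le_pow_right hn (by simp only [Finset.mem_range] at hk; omega)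
    _ = d * n ^ (d - 1) := by simp [Finset.sum_const, Finset.card_range]

end Aux
section Main

variable {F : Type*} [Field F] [Infinite F] {d : ℕ}

lemma construction (hd : 3 ≤ d) (Xs : Set (Fin d → F))
    (hXs : Xs = ⋃ i ∈ {i : Fin d | i ≠ ⟨0, Nat.lt_of_lt_of_le (by norm_num) hd⟩},
      (Submodule.span F
        ({Pi.single (⟨0, Nat.lt_of_lt_of_le (by norm_num) hd⟩ : Fin d) (1 : F), Pi.single i (1 : F)} : Set (Fin d → F)) :
        Set (Fin d → F))) (n : ℕ) :
    ∃ Y : Finset Xs, Y.card = (d - 1) * n ∧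
      n ^ (d - 1) ≤ (traces (zeroSets (fun x : Xs => (x : Fin d → F))) ↑Y).ncard := by
  classical
  set z0 : Fin d := ⟨0, by omega⟩ with hz0
  set f : Xs → Fin d → F := fun x => (x : Fin d → F) with hfdef
  set t : Fin n → F := fun j => Infinite.natEmbedding F j.val with htdef
  have ht : Function.Injective t := fun j j' h =>
    Fin.val_injective ((Infinite.natEmbedding F).injective h)
  have hcι : Fintype.card {i : Fin d // i ≠ z0} = d - 1 := by
    rw [Fintype.card_subtype_compl, Fintype.card_subtype_eq, Fintype.card_fin]
  set q : {i : Fin d // i ≠ z0} × Fin n → (Fin d → F) :=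
    fun z => t z.2 • (Pi.single z0 1 : Fin d → F) + (Pi.single z.1.1 1 : Fin d → F) with hq
  have hqXs : ∀ z, q z ∈ Xs := by
    intro z
    rw [hXs]
    refine Set.mem_biUnion z.1.2 ?_
    exact Submodule.add_mem _
      (Submodule.smul_mem _ _ (subset_span (Set.mem_insert _ _)))
      (subset_span (Set.mem_insert_iff.2 (Or.inr rfl)))
  have hq0 : ∀ z, q z z0 = t z.2 := by
    intro z
    simp [hq, Pi.single_eq_same, Pi.single_eq_of_ne (Ne.symm z.1.2)]
  have hqi : ∀ z, q z z.1.1 = 1 := by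
    intro z
    simp [hq, Pi.single_eq_same, Pi.single_eq_of_ne z.1.2]
  have hqo : ∀ z (k : Fin d), k ≠ z0 → k ≠ z.1.1 → q z k = 0 := by
    intro z k hk1 hk2
    simp [hq, Pi.single_eq_of_ne hk1, Pi.single_eq_of_ne hk2]
  set p : {i : Fin d // i ≠ z0} × Fin n → Xs := fun z => ⟨q z, hqXs z⟩ with hpdef
  have hp : Function.Injective p := by
    intro z z' h
    have hv : q z = q z' := congrArg Subtype.val h
    have hj : z.2 = z'.2 := ht (by rw [← hq0 z, ← hq0 z', hv])
    have hi : z.1 = z'.1 := by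
      by_contra hne
      have h1 : q z' z.1.1 = 0 :=
        hqo z' _ z.1.2 (fun hh => hne (Subtype.ext hh))
      have h2 := hqi z
      rw [hv, h1] at h2
      exact one_ne_zero h2.symm
    exact Prod.ext hi hj
  set Y : Finset Xs := Finset.univ.image p with hY
  have hYcard : Y.card = (d - 1) * n := by
    rw [hY, Finset.card_image_of_injective _ hp, Finset.card_univ, Fintype.card_prod,
      Fintype.card_fin, hcι]
  refine ⟨Y, hYcard, ?_⟩
  set aσ : ({i : Fin d // i ≠ z0} → Fin n) → (Fin d → F) :=
    fun σ k => if h : k = z0 then 1 else -t (σ ⟨k, h⟩) with haσ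
  have ha0 : ∀ σ, aσ σ z0 = 1 := by intro σ; simp [haσ]
  have hane : ∀ σ, aσ σ ≠ 0 := by
    intro σ h
    have := congrFun h z0
    rw [ha0 σ] at this
    exact one_ne_zero this
  have hsum : ∀ σ z, ∑ k, aσ σ k * q z k = t z.2 - t (σ z.1) := by
    intro σ z
    have hterm : ∀ k, aσ σ k * q z k =
        t z.2 * (aσ σ k * (Pi.single z0 1 : Fin d → F) k) +
          aσ σ k * (Pi.single z.1.1 1 : Fin d → F) k := by
      intro k
      simp only [hq, Pi.add_apply, Pi.smul_apply, smul_eq_mul]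
      ring
    rw [Finset.sum_congr rfl (fun k _ => hterm k), Finset.sum_add_distrib, ← Finset.mul_sum,
      sum_mul_single, sum_mul_single, ha0]
    have hai : aσ σ z.1.1 = -t (σ z.1) := by
      simp only [haσ, dif_neg z.1.2]
    rw [hai]
    ring
  set T : ({i : Fin d // i ≠ z0} → Fin n) → Set Xs :=
    fun σ => zeroSet f (aσ σ) ∩ ↑Y with hT
  have hTmem : ∀ σ, T σ ∈ traces (zeroSets f) ↑Y :=
    fun σ => ⟨_, ⟨aσ σ, hane σ, rfl⟩, rfl⟩
  have hmemT : ∀ σ z, p z ∈ T σ ↔ z.2 = σ z.1 := by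
    intro σ z
    constructor
    · rintro ⟨hz, _⟩
      have hz' : ∑ k, aσ σ k * q z k = 0 := hz
      rw [hsum] at hz'
      exact ht (sub_eq_zero.1 hz')
    · intro hzz
      refine ⟨?_, Finset.mem_coe.2 (Finset.mem_image.2 ⟨z, Finset.mem_univ _, rfl⟩)⟩
      show ∑ k, aσ σ k * q z k = 0
      rw [hsum, hzz, sub_self]
  have hTinj : Function.Injective T := by
    intro σ σ' hTT
    funext i
    have h1 : p (i, σ i) ∈ T σ := (hmemT σ (i, σ i)).2 rfl
    rw [hTT] at h1
    exact (hmemT σ' (i, σ i)).1 h1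
  have hfin : (traces (zeroSets f) ↑Y).Finite := by
    refine (Y.finite_toSet.finite_subsets).subset ?_
    rintro S ⟨A, _, rfl⟩
    exact Set.inter_subset_right
  have hrange : Set.range T ⊆ traces (zeroSets f) ↑Y := by
    rintro S ⟨σ, rfl⟩
    exact hTmem σ
  calc n ^ (d - 1) = Fintype.card ({i : Fin d // i ≠ z0} → Fin n) := by
        rw [Fintype.card_fun, Fintype.card_fin, hcι]
    _ = Nat.card ({i : Fin d // i ≠ z0} → Fin n) := Nat.card_eq_fintype_card.symm
    _ = Nat.card (Set.range T) := (Nat.card_range_of_injective hTinj).symm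
    _ = (Set.range T).ncard := Nat.card_coe_set_eq _
    _ ≤ (traces (zeroSets f) ↑Y).ncard := Set.ncard_le_ncard hrange hfin

lemma infinite_Xs (hd : 3 ≤ d) (Xs : Set (Fin d → F))
    (hXs : Xs = ⋃ i ∈ {i : Fin d | i ≠ ⟨0, Nat.lt_of_lt_of_le (by norm_num) hd⟩},
      (Submodule.span F
        ({Pi.single (⟨0, Nat.lt_of_lt_of_le (by norm_num) hd⟩ : Fin d) (1 : F), Pi.single i (1 : F)} : Set (Fin d → F)) :
        Set (Fin d → F))) : Infinite Xs := by
  set z0 : Fin d := ⟨0, by omega⟩ with hz0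
  set i1 : Fin d := ⟨1, by omega⟩ with hi1
  have hne : i1 ≠ z0 := by simp [hi1, hz0, Fin.ext_iff]
  have hmem : ∀ c : F, c • (Pi.single z0 1 : Fin d → F) + (Pi.single i1 1 : Fin d → F) ∈ Xs := by
    intro c
    rw [hXs]
    refine Set.mem_biUnion hne ?_
    exact Submodule.add_mem _
      (Submodule.smul_mem _ _ (subset_span (Set.mem_insert _ _)))
      (subset_span (Set.mem_insert_iff.2 (Or.inr rfl)))
  refine Infinite.of_injective (fun c : F => (⟨_, hmem c⟩ : Xs)) ?_
  intro c c' h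
  have h2 := congrArg (fun x : Xs => (x : Fin d → F) z0) h
  simpa [Pi.single_eq_same, Pi.single_eq_of_ne hne.symm,
    Pi.single_eq_of_ne (show z0 ≠ i1 from hne.symm)] using h2

end Main
section Pair

variable {F : Type*} [Field F] {d : ℕ}

lemma finrank_span_pair {i j : Fin d} (hij : i ≠ j) :
    Module.finrank F (span F ({Pi.single i (1 : F), Pi.single j (1 : F)} : Set (Fin d → F))) = 2 := by
  have hli : LinearIndependent F ![(Pi.single i 1 : Fin d → F), (Pi.single j 1 : Fin d → F)] := by
    rw [LinearIndependent.pair_iff]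
    intro s u hsu
    have h0 := congrFun hsu i
    have h1 := congrFun hsu j
    simp only [Pi.add_apply, Pi.smul_apply, smul_eq_mul, Pi.single_eq_same,
      Pi.single_eq_of_ne hij, Pi.single_eq_of_ne (Ne.symm hij), Pi.zero_apply,
      mul_one, mul_zero, add_zero, zero_add] at h0 h1
    exact ⟨h0, h1⟩
  have hr : Set.range ![(Pi.single i 1 : Fin d → F), (Pi.single j 1 : Fin d → F)] =
      ({Pi.single i (1 : F), Pi.single j (1 : F)} : Set (Fin d → F)) := by
    simp only [Matrix.range_cons, Matrix.range_empty, Set.singleton_union, Set.union_empty,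
      Set.union_singleton]
    exact Set.pair_comm _ _
  have := finrank_span_eq_card hli
  rw [hr] at this
  simpa using this

end Pair

/-- For `d ≥ 3`, `F` an infinite field, `X` the union of the planes
`span {e_0, e_i}` (`i ≠ 0`) in `F^d` and `f : X → F^d` the inclusion, the VC density of
`C_f` is `d - 1`; in particular for every `n` there is a subset of size `(d-1)·n` with at
least `n^(d-1)` traces, even though `f(X)` is covered by finitely many 2-dimensional
subspaces. -/
theorem statement9 {F : Type*} [Field F] [Infinite F] {d : ℕ} (hd : 3 ≤ d)
    (Xs : Set (Fin d → F))
    (hXs : Xs = ⋃ i ∈ {i : Fin d | i ≠ ⟨0, by omega⟩},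
      (Submodule.span F
        ({Pi.single (⟨0, by omega⟩ : Fin d) (1 : F), Pi.single i (1 : F)} : Set (Fin d → F)) :
        Set (Fin d → F))) :
    vcDensity (zeroSets (fun x : Xs => (x : Fin d → F))) = (d : ℝ) - 1 ∧
    (∀ n : ℕ, ∃ Y : Finset Xs, Y.card = (d - 1) * n ∧
      n ^ (d - 1) ≤ (traces (zeroSets (fun x : Xs => (x : Fin d → F))) ↑Y).ncard) ∧
    (∃ (k : ℕ) (V : Fin k → Submodule F (Fin d → F)),
      (∀ i, Module.finrank F (V i) = 2) ∧ ∀ x ∈ Xs, ∃ i, x ∈ V i) := by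
  classical
  set z0 : Fin d := ⟨0, by omega⟩ with hz0
  set i1 : Fin d := ⟨1, by omega⟩ with hi1
  have hne10 : i1 ≠ z0 := by simp [hi1, hz0, Fin.ext_iff]
  set C := zeroSets (fun x : Xs => (x : Fin d → F)) with hC
  haveI : Infinite Xs := infinite_Xs hd Xs hXs
  -- part 3 : covering by 2-dimensional subspaces
  have part3 : ∃ (k : ℕ) (V : Fin k → Submodule F (Fin d → F)),
      (∀ i, Module.finrank F (V i) = 2) ∧ ∀ x ∈ Xs, ∃ i, x ∈ V i := by
    refine ⟨d, fun i => span F ({Pi.single z0 (1 : F),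
      Pi.single (if i = z0 then i1 else i) (1 : F)} : Set (Fin d → F)), ?_, ?_⟩
    · intro i
      apply finrank_span_pair
      split_ifs with h
      · exact Ne.symm hne10
      · exact Ne.symm h
    · intro x hx
      rw [hXs] at hx
      obtain ⟨i, hi, hxi⟩ := Set.mem_iUnion₂.1 hx
      have hi' : i ≠ z0 := hi
      have hmem2 : x ∈ span F ({Pi.single z0 (1 : F),
          Pi.single (if i = z0 then i1 else i) (1 : F)} : Set (Fin d → F)) := by
        rw [if_neg hi']
        exact hxi
      exact ⟨i, hmem2⟩
  -- shatter function bounds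
  have hbdd : ∀ n : ℕ, ∀ m ∈ {m | ∃ Y : Finset Xs, Y.card = n ∧ (traces C ↑Y).ncard = m},
      m ≤ ∑ k ∈ Finset.range d, n.choose k := by
    rintro n m ⟨Y, hYc, rfl⟩
    calc (traces C ↑Y).ncard ≤ (Y.powerset.filter (fun W => W.card < d)).card :=
          traces_ncard_le _ Subtype.val_injective Y
      _ ≤ ∑ k ∈ Finset.range d, Y.card.choose k := filter_card_le Y d
      _ = ∑ k ∈ Finset.range d, n.choose k := by rw [hYc]
  have hBdd : ∀ n : ℕ, BddAbove {m | ∃ Y : Finset Xs, Y.card = n ∧ (traces C ↑Y).ncard = m} :=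
    fun n => ⟨∑ k ∈ Finset.range d, n.choose k, fun m hm => hbdd n m hm⟩
  have hNe : ∀ n : ℕ, {m | ∃ Y : Finset Xs, Y.card = n ∧ (traces C ↑Y).ncard = m}.Nonempty := by
    intro n
    obtain ⟨Y, hY⟩ := Infinite.exists_subset_card_eq Xs n
    exact ⟨(traces C ↑Y).ncard, Y, hY, rfl⟩
  have hub : ∀ n : ℕ, 1 ≤ n → vcShatterFn C n ≤ d * n ^ (d - 1) := by
    intro n hn
    refine csSup_le (hNe n) ?_
    intro m hm
    exact le_trans (hbdd n m hm) (sum_choose_le hn)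
  have hlow : ∀ m : ℕ, m ^ (d - 1) ≤ vcShatterFn C ((d - 1) * m) := by
    intro m
    obtain ⟨Y, hYc, hYn⟩ := construction hd Xs hXs m
    exact le_trans hYn (le_csSup (hBdd _) ⟨Y, hYc, rfl⟩)
  -- density
  set S : Set ℝ := {ℓ : ℝ | 0 < ℓ ∧ ∃ K : ℝ, ∀ n : ℕ, 1 ≤ n →
    (vcShatterFn C n : ℝ) ≤ K * (n : ℝ) ^ ℓ} with hS
  have hdR : (3 : ℝ) ≤ (d : ℝ) := by exact_mod_cast hd
  have hd1 : ((d : ℝ) - 1) = ((d - 1 : ℕ) : ℝ) := by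
    rw [Nat.cast_sub (by omega)]; norm_num
  have hmemS : ((d : ℝ) - 1) ∈ S := by
    refine ⟨by linarith, (d : ℝ), ?_⟩
    intro n hn
    rw [hd1, Real.rpow_natCast]
    exact_mod_cast hub n hn
  have hlbS : ∀ ℓ ∈ S, (d : ℝ) - 1 ≤ ℓ := by
    rintro ℓ ⟨hℓpos, K, hK⟩
    by_contra hlt
    push_neg at hlt
    set δ : ℝ := ((d : ℝ) - 1) - ℓ with hδ
    have hδpos : 0 < δ := by rw [hδ]; linarith
    have hKb : ∀ m : ℕ, 1 ≤ m → ((m : ℝ)) ^ δ ≤ K * ((d : ℝ) - 1) ^ ℓ := by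
      intro m hm
      have hmR : (1 : ℝ) ≤ (m : ℝ) := by exact_mod_cast hm
      have hm0 : (0 : ℝ) < (m : ℝ) := by linarith
      have h1 : ((m ^ (d - 1) : ℕ) : ℝ) ≤ (vcShatterFn C ((d - 1) * m) : ℝ) :=
        Nat.cast_le.2 (hlow m)
      have hdm : 1 ≤ (d - 1) * m := by
        have h2 : 1 ≤ d - 1 := by omega
        exact Nat.one_le_iff_ne_zero.2 (by positivity)
      have h2 := hK ((d - 1) * m) hdm
      have hcast : (((d - 1) * m : ℕ) : ℝ) = ((d : ℝ) - 1) * m := by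
        rw [Nat.cast_mul, hd1]
      have h3 : (m : ℝ) ^ (((d : ℝ)) - 1) ≤ K * (((d : ℝ) - 1) * m) ^ ℓ := by
        have e1 : (m : ℝ) ^ (((d : ℝ)) - 1) = ((m ^ (d - 1) : ℕ) : ℝ) := by
          rw [hd1, Real.rpow_natCast]; push_cast; ring
        rw [e1, ← hcast]
        exact le_trans h1 h2
      have hsplit : (m : ℝ) ^ (((d : ℝ)) - 1) = (m : ℝ) ^ δ * (m : ℝ) ^ ℓ := by
        rw [← Real.rpow_add hm0]
        congr 1
        rw [hδ]; ring
      have hmul : (((d : ℝ) - 1) * m) ^ ℓ = ((d : ℝ) - 1) ^ ℓ * (m : ℝ) ^ ℓ :=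
        Real.mul_rpow (by linarith) (le_of_lt hm0)
      rw [hsplit, hmul] at h3
      have hml : (0 : ℝ) < (m : ℝ) ^ ℓ := Real.rpow_pos_of_pos hm0 ℓ
      have h4 : (m : ℝ) ^ δ * (m : ℝ) ^ ℓ ≤ K * ((d : ℝ) - 1) ^ ℓ * (m : ℝ) ^ ℓ := by
        rw [mul_assoc]; exact h3
      exact le_of_mul_le_mul_right h4 hml
    obtain ⟨m, hm1, hm2⟩ :=
      ((((Filter.Tendsto.comp (tendsto_rpow_atTop hδpos) tendsto_natCast_atTop_atTop).eventually_gt_atTop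
        (K * ((d : ℝ) - 1) ^ ℓ)).and (Filter.eventually_ge_atTop 1)).exists)
    exact absurd (hKb m hm2) (not_le.2 hm1)
  refine ⟨?_, fun n => construction hd Xs hXs n, part3⟩
  show sInf S = (d : ℝ) - 1
  apply le_antisymm
  · exact csInf_le ⟨0, fun ℓ hℓ => le_of_lt hℓ.1⟩ hmemS
  · exact le_csInf ⟨_, hmemS⟩ hlbS
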